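/- Let p be an odd prime and f ∈ ℤ[x] irreducible. If f(0)/lc(f) is not a p-th power in ℚ, then f(x^p) is irreducible in ℤ[x]. -/

import Mathlib

open Polynomial IntermediateField

private lemma aux_comp_xpow_irreducible {K : Type} [Field K] {p : ℕ} (hp : p.Prime)
    (hodd : Odd p) {g : K[X]} (hgirr : Irreducible g) (hgmonic : g.Monic)
    (hnp : ∀ q : K, q ^ p ≠ g.coeff 0) : Irreducible (g.comp (X ^ p)) := by
  apply Polynomial.irreducible_comp hgmonic (monic_X_pow p) hgirr
  intro E _ _ x hx
  have hint : IsIntegral K x := by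
    by_contra h
    rw [minpoly.eq_zero h] at hx
    exact hgirr.ne_zero hx.symm
  simp only [Polynomial.map_pow, map_X]
  apply X_pow_sub_C_irreducible_of_prime hp
  intro b hb
  haveI := (IntermediateField.adjoin.powerBasis hint).finite
  have hnormgen : Algebra.norm K (IntermediateField.AdjoinSimple.gen K x)
      = (-1) ^ g.natDegree * g.coeff 0 := by
    rw [← IntermediateField.adjoin.powerBasis_gen hint,
      Algebra.PowerBasis.norm_gen_eq_coeff_zero_minpoly]
    congr 2
    · rw [IntermediateField.adjoin.powerBasis_dim, hx]
    · rw [IntermediateField.adjoin.powerBasis_gen hint, IntermediateField.minpoly_gen, hx]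
  apply hnp ((-1) ^ g.natDegree * Algebra.norm K b)
  rw [mul_pow, ← pow_mul, mul_comm g.natDegree p, pow_mul, hodd.neg_one_pow,
    ← map_pow, hb, hnormgen, ← mul_assoc, ← pow_add, ← two_mul, pow_mul]
  rw [neg_one_sq, one_pow, one_mul]

/-- If `p` is an odd prime, `f ∈ ℤ[x]` is irreducible, and `f(0)/lc(f)` is not a
`p`-th power in `ℚ`, then `f(x^p)` is irreducible in `ℤ[x]`. -/
theorem comp_xpow_prime_irreducible (p : ℕ) (hp : p.Prime) (hodd : Odd p)
    (f : Polynomial ℤ) (hf : Irreducible f)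
    (hnp : ¬ ∃ q : ℚ, q ^ p = (f.coeff 0 : ℚ) / (f.leadingCoeff : ℚ)) :
    Irreducible (f.comp (X ^ p)) := by
  have hf0 : f ≠ 0 := hf.ne_zero
  -- `f` is nonconstant
  have hdeg : f.natDegree ≠ 0 := by
    intro h
    apply hnp
    refine ⟨1, ?_⟩
    have : f.leadingCoeff = f.coeff 0 := by
      rw [leadingCoeff, h]
    rw [this, one_pow, div_self]
    exact_mod_cast fun h0 => hf0 (by
      rw [eq_C_of_natDegree_eq_zero h]
      simpa using (by exact_mod_cast h0 : f.coeff 0 = 0))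
  -- `f` is primitive
  have hprim : f.IsPrimitive := by
    intro r hr
    obtain ⟨g, hg⟩ := hr
    rcases hf.isUnit_or_isUnit hg with h | h
    · exact isUnit_C.mp h
    · exfalso
      apply hdeg
      rw [hg, natDegree_mul (fun h0 => by simp [h0] at hg; exact hf0 hg)
        (fun h0 => by simp [h0] at hg; exact hf0 hg),
        natDegree_eq_zero_of_isUnit h]
      simp
  -- `f.comp (X ^ p)` is primitive
  have hprim' : (f.comp (X ^ p)).IsPrimitive := by
    intro r hr
    apply hprim r
    rw [C_dvd_iff_dvd_coeff] at hr ⊢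
    intro n
    have := hr (n * p)
    rwa [← expand_eq_comp_X_pow, coeff_expand_mul hp.pos] at this
  -- move to ℚ
  set φ := (Int.castRingHom ℚ)
  have hφ : Function.Injective φ := Int.cast_injective
  set F := f.map φ with hF
  have hFirr : Irreducible F :=
    (IsPrimitive.Int.irreducible_iff_irreducible_map_cast hprim).mp hf
  have hF0 : F ≠ 0 := hFirr.ne_zero
  have hlc : F.leadingCoeff = (f.leadingCoeff : ℚ) := leadingCoeff_map_of_injective hφ f
  have hlc0 : F.leadingCoeff ≠ 0 := leadingCoeff_ne_zero.mpr hF0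
  set g : ℚ[X] := F * C F.leadingCoeff⁻¹ with hg
  have hgmonic : g.Monic := monic_mul_leadingCoeff_inv hF0
  have hu : IsUnit (C F.leadingCoeff⁻¹ : ℚ[X]) :=
    isUnit_C.mpr (isUnit_iff_ne_zero.mpr (inv_ne_zero hlc0))
  have hassoc : Associated F g := ⟨hu.unit, by rw [IsUnit.unit_spec]⟩
  have hgirr : Irreducible g := hassoc.irreducible hFirr
  have hgcoeff : g.coeff 0 = (f.coeff 0 : ℚ) / (f.leadingCoeff : ℚ) := by
    rw [hg, coeff_mul_C, coeff_map, ← hlc, div_eq_mul_inv]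
    rfl
  have key : Irreducible (g.comp (X ^ p)) := by
    apply aux_comp_xpow_irreducible hp hodd hgirr hgmonic
    intro q hq
    exact hnp ⟨q, by rw [hq, hgcoeff]⟩
  -- transfer back
  have hcompassoc : Associated (F.comp (X ^ p)) (g.comp (X ^ p)) := by
    rw [hg, mul_comp, C_comp]
    exact ⟨hu.unit, by rw [IsUnit.unit_spec]⟩
  have hFcomp : Irreducible ((f.comp (X ^ p)).map φ) := by
    rw [map_comp]
    simpa using hcompassoc.symm.irreducible key
  exact (IsPrimitive.Int.irreducible_iff_irreducible_map_cast hprim').mpr hFcomp
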